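/- Let q > 1 be real, D = diag(q, −q⁻¹), and U = ((1/[2]_q, √[3]_q/[2]_q), (−√[3]_q/[2]_q, 1/[2]_q)). Then the matrix N = D·(U·D·Uᵀ)·D satisfies trace(N) = 0 and N² = 1; consequently trace(Nⁿ) = 1 + (−1)ⁿ for every natural number n, i.e. it equals 0 for odd n and 2 for even n. -/

import Mathlib

open Matrix

/-- The quantum integer `[n]_q = (qⁿ − q⁻ⁿ)/(q − q⁻¹)`. -/
noncomputable def qn (q : ℝ) (n : ℤ) : ℝ := (q ^ n - q ^ (-n)) / (q - q⁻¹)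

/-- The diagonal R-matrix `D = diag(q, −q⁻¹)`. -/
noncomputable def Dmat (q : ℝ) : Matrix (Fin 2) (Fin 2) ℝ := !![q, 0; 0, -q⁻¹]

/-- The mixing (Racah) matrix `U`. -/
noncomputable def Umat (q : ℝ) : Matrix (Fin 2) (Fin 2) ℝ :=
  !![1 / qn q 2, Real.sqrt (qn q 3) / qn q 2;
     -Real.sqrt (qn q 3) / qn q 2, 1 / qn q 2]

/-- `N = D·(U·D·Uᵀ)·D` (the torus period in the `[22]` sector) has
`trace N = 0` and `N² = 1`; hence `trace(Nⁿ) = 1 + (−1)ⁿ` for every `n : ℕ`. -/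
theorem torus_period_22_sector (q : ℝ) (hq : 1 < q) :
    (Dmat q * (Umat q * Dmat q * (Umat q)ᵀ) * Dmat q).trace = 0 ∧
    (Dmat q * (Umat q * Dmat q * (Umat q)ᵀ) * Dmat q) ^ 2 = 1 ∧
    ∀ n : ℕ, ((Dmat q * (Umat q * Dmat q * (Umat q)ᵀ) * Dmat q) ^ n).trace =
      1 + (-1 : ℝ) ^ n := by
  have hq0 : (0:ℝ) < q := lt_trans one_pos hq
  have hqne : q ≠ 0 := ne_of_gt hq0
  have hinv : q⁻¹ < 1 := by rw [inv_lt_one_iff₀]; right; exact hq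
  have hd : q - q⁻¹ ≠ 0 := by
    have : q⁻¹ < q := lt_trans hinv hq
    linarith
  have h2 : qn q 2 = q + q⁻¹ := by
    simp only [qn, zpow_two, _root_.zpow_neg]
    rw [div_eq_iff hd]
    field_simp
    ring
  have h3 : qn q 3 = q^2 + 1 + (q⁻¹)^2 := by
    simp only [qn]
    rw [show ((3:ℤ)) = ((3:ℕ):ℤ) by norm_num, _root_.zpow_neg, zpow_natCast,
      div_eq_iff hd]
    field_simp
    ring
  have h3pos : (0:ℝ) ≤ qn q 3 := by rw [h3]; positivity
  set s := Real.sqrt (qn q 3) with hsdef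
  have hs : s^2 = q^2 + 1 + (q⁻¹)^2 := by rw [hsdef, Real.sq_sqrt h3pos, h3]
  have hs2 : s^2 * q^2 = q^4 + q^2 + 1 := by
    rw [hs]; field_simp
  have hapos : (0:ℝ) < q + q⁻¹ := by positivity
  have hane : q + q⁻¹ ≠ 0 := ne_of_gt hapos
  -- factor the scalar out of U
  have hU : Umat q = (q+q⁻¹)⁻¹ • !![1, s; -s, 1] := by
    rw [Umat, h2]
    ext i j
    fin_cases i <;> fin_cases j <;>
      simp [Matrix.smul_apply, div_eq_inv_mul, hsdef]
  have hVT : (!![1, s; -s, 1] : Matrix (Fin 2) (Fin 2) ℝ)ᵀ = !![1, -s; s, 1] := by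
    ext i j
    fin_cases i <;> fin_cases j <;> simp
  -- the polynomial core
  have hP : Dmat q * (!![1, s; -s, 1] * Dmat q * (!![1, s; -s, 1] : Matrix (Fin 2) (Fin 2) ℝ)ᵀ) * Dmat q
      = (q+q⁻¹) • !![-1, s; s, 1] := by
    rw [hVT, Dmat]
    ext i j
    fin_cases i <;> fin_cases j <;>
      simp only [Matrix.mul_fin_two, Matrix.smul_apply, Matrix.cons_val',
        Matrix.cons_val_zero, Matrix.cons_val_one, Matrix.head_cons,
        Matrix.empty_val', Matrix.cons_val_fin_one, Matrix.head_fin_const,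
        Matrix.of_apply, smul_eq_mul, Fin.mk_zero, Fin.mk_one, Fin.isValue]
    · field_simp
      linear_combination (-1 : ℝ) * hs2
    · field_simp
      ring
    · field_simp
      ring
    · field_simp
      linear_combination hs2
  have hNform : Dmat q * (Umat q * Dmat q * (Umat q)ᵀ) * Dmat q
      = (q+q⁻¹)⁻¹ • !![-1, s; s, 1] := by
    rw [hU]
    simp only [Matrix.transpose_smul, Matrix.smul_mul, Matrix.mul_smul, smul_smul]
    rw [hP, smul_smul]
    congr 1
    field_simp
  have htr : (Dmat q * (Umat q * Dmat q * (Umat q)ᵀ) * Dmat q).trace = 0 := by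
    rw [hNform, Matrix.trace_smul, Matrix.trace_fin_two_of]
    simp
  have hsq : (Dmat q * (Umat q * Dmat q * (Umat q)ᵀ) * Dmat q) ^ 2 = 1 := by
    rw [hNform, pow_two, Matrix.smul_mul, Matrix.mul_smul, smul_smul,
      Matrix.mul_fin_two, Matrix.one_fin_two]
    ext i j
    fin_cases i <;> fin_cases j <;>
      simp only [Matrix.smul_apply, Matrix.cons_val', Matrix.cons_val_zero,
        Matrix.cons_val_one, Matrix.head_cons, Matrix.empty_val',
        Matrix.cons_val_fin_one, Matrix.head_fin_const, Matrix.of_apply,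
        smul_eq_mul] <;>
      [skip; simp; simp; skip]
    · simp
      field_simp
      linear_combination hs2
    · simp
      field_simp
      linear_combination hs2
  refine ⟨htr, hsq, fun n => ?_⟩
  rcases Nat.even_or_odd n with ⟨k, hk⟩ | ⟨k, hk⟩
  · have hk2 : n = 2 * k := by omega
    rw [hk2, pow_mul, hsq, one_pow, Matrix.trace_one]
    simp [pow_mul]
    norm_num
  · rw [hk, pow_add, pow_mul, hsq, one_pow, one_mul, pow_one, htr, pow_add,
      pow_mul]
    norm_num
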